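/- (Lemma 3.1(vii)) Given two admissible 2D primitive states U⁻ and U⁺ (resolved along a common normal direction) with the HLLC wave speeds s⁻ = min(s_min(U⁻), s_min(U⁺)) and s⁺ = max(s_max(U⁻), s_max(U⁺)), one has (A⁻)² - (B⁻)² - (D⁻)²(s⁻ - u_n⁻)² - (m_τ⁻)²(s⁻ - u_n⁻)² > 0 and (A⁺)² - (B⁺)² - (D⁺)²(s⁺ - u_n⁺)² - (m_τ⁺)²(s⁺ - u_n⁺)² > 0. -/

import Mathlib

set_option maxHeartbeats 1000000

noncomputable section

namespace SRHD2D

/-- Lorentz factor `γ = (1 - u_n² - u_τ²)^(-1/2)`. -/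
def lorentz (un ut : ℝ) : ℝ := 1 / Real.sqrt (1 - un ^ 2 - ut ^ 2)

/-- Specific enthalpy `h = 1 + Γ p / ((Γ - 1) ρ)` of a perfect gas. -/
def enthalpy (G r p : ℝ) : ℝ := 1 + G * p / ((G - 1) * r)

/-- Sound speed `c_s = √(Γ p / (ρ h))`. -/
def soundSpeed (G r p : ℝ) : ℝ := Real.sqrt (G * p / (r * enthalpy G r p))

/-- Conserved rest-mass density `D = ρ γ`. -/
def Dc (r un ut : ℝ) : ℝ := r * lorentz un ut

/-- Normal momentum `m_n = ρ h γ² u_n`. -/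
def mn (G r un ut p : ℝ) : ℝ := r * enthalpy G r p * lorentz un ut ^ 2 * un

/-- Tangential momentum `m_τ = ρ h γ² u_τ`. -/
def mt (G r un ut p : ℝ) : ℝ := r * enthalpy G r p * lorentz un ut ^ 2 * ut

/-- Conserved total energy `E = ρ h γ² - p`. -/
def Ec (G r un ut p : ℝ) : ℝ := r * enthalpy G r p * lorentz un ut ^ 2 - p

/-- `σ_s = c_s² / (γ² (1 - c_s²))`. -/
def sigmaS (G r un ut p : ℝ) : ℝ :=
  soundSpeed G r p ^ 2 / (lorentz un ut ^ 2 * (1 - soundSpeed G r p ^ 2))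

/-- Minimum normal characteristic speed. -/
def sMin (G r un ut p : ℝ) : ℝ :=
  (un - Real.sqrt (sigmaS G r un ut p * (1 - un ^ 2 + sigmaS G r un ut p))) /
    (1 + sigmaS G r un ut p)

/-- Maximum normal characteristic speed. -/
def sMax (G r un ut p : ℝ) : ℝ :=
  (un + Real.sqrt (sigmaS G r un ut p * (1 - un ^ 2 + sigmaS G r un ut p))) /
    (1 + sigmaS G r un ut p)

private lemma core (G r p un ut s sg g2 h W ap : ℝ)
    (hG1 : 1 < G) (hG2 : G ≤ 2) (hr : 0 < r) (hp : 0 < p)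
    (hu : un ^ 2 + ut ^ 2 < 1) (hs1 : -1 < s) (hs2 : s < 1) (hsg : 0 < sg)
    (hg2 : g2 = 1 / (1 - un ^ 2 - ut ^ 2))
    (hh : h = 1 + G * p / ((G - 1) * r))
    (hW : W = r * h * g2)
    (hap : ap = p + r * g2 * (G + h * (2 - G)) / (G - 1))
    (hM : 0 < ap * sg - p * (1 + sg))
    (hP : sg * (1 - un ^ 2 + sg) ≤ ((1 + sg) * s - un) ^ 2) :
    0 < (s * (W - p) - W * un) ^ 2 - (W * un * (s - un) - p) ^ 2
      - r ^ 2 * g2 * (s - un) ^ 2 - (W * ut) ^ 2 * (s - un) ^ 2 := by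
  have he : 0 < 1 - un ^ 2 - ut ^ 2 := by nlinarith
  have hG0 : 0 < G - 1 := by linarith
  have hsg1 : (0:ℝ) < 1 + sg := by linarith
  have hh0 : 0 < h := by
    rw [hh]
    have : 0 < G * p / ((G - 1) * r) := div_pos (mul_pos (by linarith) hp) (mul_pos hG0 hr)
    linarith
  have hg20 : 0 < g2 := by rw [hg2]; positivity
  have hap0 : 0 < ap := by
    rw [hap]
    have h1 : 0 < G + h * (2 - G) := by nlinarith
    have : 0 < r * g2 * (G + h * (2 - G)) / (G - 1) :=
      div_pos (mul_pos (mul_pos hr hg20) h1) hG0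
    linarith
  have key1 : (s * (W - p) - W * un) ^ 2 - (W * un * (s - un) - p) ^ 2
      - r ^ 2 * g2 * (s - un) ^ 2 - (W * ut) ^ 2 * (s - un) ^ 2
      = p * (ap * (s - un) ^ 2 + 2 * un * p * (s - un) - p * (1 - un ^ 2)) := by
    subst hW hap hh hg2
    field_simp
    ring
  have key2 : p * (ap * (s - un) ^ 2 + 2 * un * p * (s - un) - p * (1 - un ^ 2))
      = p * ( ap / (1 + sg) ^ 2 * (((1 + sg) * s - un) ^ 2 - sg * (1 - un ^ 2 + sg))
        + (1 + s) / 2 * (1 - un) ^ 2 * ((ap * sg - p * (1 + sg)) / (1 + sg))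
        + (1 - s) / 2 * (1 + un) ^ 2 * ((ap * sg - p * (1 + sg)) / (1 + sg)) ) := by
    field_simp
    ring
  rw [key1, key2]
  have hun1 : un < 1 := by nlinarith [sq_nonneg ut]
  have hun2 : -1 < un := by nlinarith [sq_nonneg ut]
  have t1 : 0 ≤ ap / (1 + sg) ^ 2 * (((1 + sg) * s - un) ^ 2 - sg * (1 - un ^ 2 + sg)) := by
    apply mul_nonneg (by positivity) (by linarith)
  have t2 : 0 < (1 + s) / 2 * (1 - un) ^ 2 * ((ap * sg - p * (1 + sg)) / (1 + sg)) := by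
    apply mul_pos (mul_pos (by linarith) (pow_pos (by linarith : (0:ℝ) < 1 - un) 2)) (div_pos hM hsg1)
  have t3 : 0 < (1 - s) / 2 * (1 + un) ^ 2 * ((ap * sg - p * (1 + sg)) / (1 + sg)) := by
    apply mul_pos (mul_pos (by linarith) (pow_pos (by linarith : (0:ℝ) < 1 + un) 2)) (div_pos hM hsg1)
  apply mul_pos hp
  linarith

private lemma lorentz_sq (un ut : ℝ) (hu : un ^ 2 + ut ^ 2 < 1) :
    lorentz un ut ^ 2 = 1 / (1 - un ^ 2 - ut ^ 2) := by
  have he : 0 < 1 - un ^ 2 - ut ^ 2 := by nlinarith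
  rw [lorentz, div_pow, one_pow, Real.sq_sqrt he.le]

private lemma enthalpy_pos (G r p : ℝ) (hG1 : 1 < G) (hr : 0 < r) (hp : 0 < p) :
    0 < enthalpy G r p := by
  have h1 : 0 < G - 1 := by linarith
  have : 0 < G * p / ((G - 1) * r) := div_pos (mul_pos (by linarith) hp) (mul_pos h1 hr)
  rw [enthalpy]; linarith

private lemma soundSpeed_sq (G r p : ℝ) (hG1 : 1 < G) (hr : 0 < r) (hp : 0 < p) :
    soundSpeed G r p ^ 2 = G * p / (r * enthalpy G r p) := by
  have h := enthalpy_pos G r p hG1 hr hp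
  rw [soundSpeed, Real.sq_sqrt]
  exact le_of_lt (div_pos (mul_pos (by linarith) hp) (mul_pos hr h))

private lemma sigmaS_eq (G r un ut p : ℝ) (hG1 : 1 < G) (hG2 : G ≤ 2)
    (hr : 0 < r) (hu : un ^ 2 + ut ^ 2 < 1) (hp : 0 < p) :
    sigmaS G r un ut p
      = (1 - un ^ 2 - ut ^ 2) * (G * (G - 1) * p) / ((G - 1) * r + G * (2 - G) * p) := by
  have he : 0 < 1 - un ^ 2 - ut ^ 2 := by nlinarith
  have h1 : 0 < G - 1 := by linarith
  have hd : 0 < (G - 1) * r + G * (2 - G) * p := by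
    nlinarith [mul_pos h1 hr, mul_nonneg (mul_nonneg (show (0:ℝ) ≤ G by linarith)
      (show (0:ℝ) ≤ 2 - G by linarith)) hp.le]
  have hq : 0 < (G - 1) * r + G * p := by nlinarith
  rw [sigmaS, soundSpeed_sq G r p hG1 hr hp, lorentz_sq un ut hu, enthalpy]
  rw [show r * (1 + G * p / ((G - 1) * r)) = ((G - 1) * r + G * p) / (G - 1) by
    field_simp]
  rw [show G * p / (((G - 1) * r + G * p) / (G - 1)) = G * (G - 1) * p / ((G - 1) * r + G * p) by
    rw [div_div_eq_mul_div]; ring_nf]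
  rw [show 1 - G * (G - 1) * p / ((G - 1) * r + G * p)
      = ((G - 1) * r + G * (2 - G) * p) / ((G - 1) * r + G * p) by
    field_simp; ring]
  field_simp

private lemma sigmaS_pos (G r un ut p : ℝ) (hG1 : 1 < G) (hG2 : G ≤ 2)
    (hr : 0 < r) (hu : un ^ 2 + ut ^ 2 < 1) (hp : 0 < p) :
    0 < sigmaS G r un ut p := by
  have he : 0 < 1 - un ^ 2 - ut ^ 2 := by nlinarith
  have h1 : 0 < G - 1 := by linarith
  have hd : 0 < (G - 1) * r + G * (2 - G) * p := by
    nlinarith [mul_pos h1 hr, mul_nonneg (mul_nonneg (show (0:ℝ) ≤ G by linarith)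
      (show (0:ℝ) ≤ 2 - G by linarith)) hp.le]
  rw [sigmaS_eq G r un ut p hG1 hG2 hr hu hp]
  exact div_pos (mul_pos he (mul_pos (mul_pos (by linarith) h1) hp)) hd

private lemma Mpos (G r un ut p : ℝ) (hG1 : 1 < G) (hG2 : G ≤ 2)
    (hr : 0 < r) (hu : un ^ 2 + ut ^ 2 < 1) (hp : 0 < p) :
    0 < (p + r * (1 / (1 - un ^ 2 - ut ^ 2)) * (G + enthalpy G r p * (2 - G)) / (G - 1))
          * sigmaS G r un ut p - p * (1 + sigmaS G r un ut p) := by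
  have he : 0 < 1 - un ^ 2 - ut ^ 2 := by nlinarith
  have h1 : 0 < G - 1 := by linarith
  have hd : 0 < (G - 1) * r + G * (2 - G) * p := by
    nlinarith [mul_pos h1 hr, mul_nonneg (mul_nonneg (show (0:ℝ) ≤ G by linarith)
      (show (0:ℝ) ≤ 2 - G by linarith)) hp.le]
  have key : (p + r * (1 / (1 - un ^ 2 - ut ^ 2)) * (G + enthalpy G r p * (2 - G)) / (G - 1))
          * sigmaS G r un ut p - p * (1 + sigmaS G r un ut p)
      = p * ((G ^ 2 - 1) * r + G * (2 - G) * p) / ((G - 1) * ((G - 1) * r + G * (2 - G) * p)) := by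
    rw [sigmaS_eq G r un ut p hG1 hG2 hr hu hp, enthalpy]
    generalize hX : (G - 1) * r + G * (2 - G) * p = X at hd ⊢
    have hd' := hd.ne'
    have h1' := h1.ne'
    have he' := he.ne'
    have hr' := hr.ne'
    field_simp
    subst hX
    ring
  rw [key]
  have hnum : 0 < (G ^ 2 - 1) * r + G * (2 - G) * p := by
    nlinarith [mul_pos (show (0:ℝ) < G ^ 2 - 1 by nlinarith) hr,
      mul_nonneg (mul_nonneg (show (0:ℝ) ≤ G by linarith)
      (show (0:ℝ) ≤ 2 - G by linarith)) hp.le]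
  exact div_pos (mul_pos hp hnum) (mul_pos h1 hd)

private lemma state_main (G r un ut p s : ℝ) (hG1 : 1 < G) (hG2 : G ≤ 2)
    (hr : 0 < r) (hu : un ^ 2 + ut ^ 2 < 1) (hp : 0 < p)
    (hs1 : -1 < s) (hs2 : s < 1)
    (hP : sigmaS G r un ut p * (1 - un ^ 2 + sigmaS G r un ut p)
        ≤ ((1 + sigmaS G r un ut p) * s - un) ^ 2) :
    0 < (s * Ec G r un ut p - mn G r un ut p) ^ 2
      - (mn G r un ut p * (s - un) - p) ^ 2
      - Dc r un ut ^ 2 * (s - un) ^ 2 - mt G r un ut p ^ 2 * (s - un) ^ 2 := by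
  have hcore := core G r p un ut s (sigmaS G r un ut p)
      (1 / (1 - un ^ 2 - ut ^ 2)) (enthalpy G r p)
      (r * enthalpy G r p * (1 / (1 - un ^ 2 - ut ^ 2)))
      (p + r * (1 / (1 - un ^ 2 - ut ^ 2)) * (G + enthalpy G r p * (2 - G)) / (G - 1))
      hG1 hG2 hr hp hu hs1 hs2 (sigmaS_pos G r un ut p hG1 hG2 hr hu hp)
      rfl rfl rfl rfl (Mpos G r un ut p hG1 hG2 hr hu hp) hP
  calc (0:ℝ) < _ := hcore
    _ = _ := by
      simp only [Ec, mn, mt, Dc, mul_pow]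
      rw [lorentz_sq un ut hu]
      try ring

private lemma hP_left (G r un ut p s : ℝ) (hG1 : 1 < G) (hG2 : G ≤ 2)
    (hr : 0 < r) (hu : un ^ 2 + ut ^ 2 < 1) (hp : 0 < p)
    (hs : s ≤ sMin G r un ut p) :
    sigmaS G r un ut p * (1 - un ^ 2 + sigmaS G r un ut p)
      ≤ ((1 + sigmaS G r un ut p) * s - un) ^ 2 := by
  have hsg := sigmaS_pos G r un ut p hG1 hG2 hr hu hp
  have hun1 : un < 1 := by nlinarith [sq_nonneg ut]
  have hD : 0 ≤ sigmaS G r un ut p * (1 - un ^ 2 + sigmaS G r un ut p) := by nlinarith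
  have h1 : (0:ℝ) < 1 + sigmaS G r un ut p := by linarith
  rw [sMin] at hs
  have h2 : s * (1 + sigmaS G r un ut p)
      ≤ un - Real.sqrt (sigmaS G r un ut p * (1 - un ^ 2 + sigmaS G r un ut p)) :=
    (le_div_iff₀ h1).mp hs
  nlinarith [Real.sq_sqrt hD,
    Real.sqrt_nonneg (sigmaS G r un ut p * (1 - un ^ 2 + sigmaS G r un ut p))]

private lemma hP_right (G r un ut p s : ℝ) (hG1 : 1 < G) (hG2 : G ≤ 2)
    (hr : 0 < r) (hu : un ^ 2 + ut ^ 2 < 1) (hp : 0 < p)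
    (hs : sMax G r un ut p ≤ s) :
    sigmaS G r un ut p * (1 - un ^ 2 + sigmaS G r un ut p)
      ≤ ((1 + sigmaS G r un ut p) * s - un) ^ 2 := by
  have hsg := sigmaS_pos G r un ut p hG1 hG2 hr hu hp
  have hun1 : un < 1 := by nlinarith [sq_nonneg ut]
  have hD : 0 ≤ sigmaS G r un ut p * (1 - un ^ 2 + sigmaS G r un ut p) := by nlinarith
  have h1 : (0:ℝ) < 1 + sigmaS G r un ut p := by linarith
  rw [sMax] at hs
  have h2 : un + Real.sqrt (sigmaS G r un ut p * (1 - un ^ 2 + sigmaS G r un ut p))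
      ≤ s * (1 + sigmaS G r un ut p) :=
    (div_le_iff₀ h1).mp hs
  nlinarith [Real.sq_sqrt hD,
    Real.sqrt_nonneg (sigmaS G r un ut p * (1 - un ^ 2 + sigmaS G r un ut p))]

private lemma sMin_gt (G r un ut p : ℝ) (hG1 : 1 < G) (hG2 : G ≤ 2)
    (hr : 0 < r) (hu : un ^ 2 + ut ^ 2 < 1) (hp : 0 < p) :
    -1 < sMin G r un ut p := by
  have hsg := sigmaS_pos G r un ut p hG1 hG2 hr hu hp
  have hun1 : un < 1 := by nlinarith [sq_nonneg ut]
  have hun2 : -1 < un := by nlinarith [sq_nonneg ut]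
  have h1 : (0:ℝ) < 1 + sigmaS G r un ut p := by linarith
  have hs : Real.sqrt (sigmaS G r un ut p * (1 - un ^ 2 + sigmaS G r un ut p))
      < 1 + sigmaS G r un ut p + un := by
    rw [Real.sqrt_lt' (by linarith)]
    nlinarith [mul_pos (mul_pos (show (0:ℝ) < 1 + un by linarith)
      (show (0:ℝ) < 1 + un by linarith)) h1]
  rw [sMin, lt_div_iff₀ h1]
  linarith

private lemma sMin_lt (G r un ut p : ℝ) (hG1 : 1 < G) (hG2 : G ≤ 2)
    (hr : 0 < r) (hu : un ^ 2 + ut ^ 2 < 1) (hp : 0 < p) :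
    sMin G r un ut p < 1 := by
  have hsg := sigmaS_pos G r un ut p hG1 hG2 hr hu hp
  have hun1 : un < 1 := by nlinarith [sq_nonneg ut]
  have h1 : (0:ℝ) < 1 + sigmaS G r un ut p := by linarith
  have := Real.sqrt_nonneg (sigmaS G r un ut p * (1 - un ^ 2 + sigmaS G r un ut p))
  rw [sMin, div_lt_iff₀ h1]
  nlinarith

private lemma sMax_lt (G r un ut p : ℝ) (hG1 : 1 < G) (hG2 : G ≤ 2)
    (hr : 0 < r) (hu : un ^ 2 + ut ^ 2 < 1) (hp : 0 < p) :
    sMax G r un ut p < 1 := by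
  have hsg := sigmaS_pos G r un ut p hG1 hG2 hr hu hp
  have hun1 : un < 1 := by nlinarith [sq_nonneg ut]
  have hun2 : -1 < un := by nlinarith [sq_nonneg ut]
  have h1 : (0:ℝ) < 1 + sigmaS G r un ut p := by linarith
  have hs : Real.sqrt (sigmaS G r un ut p * (1 - un ^ 2 + sigmaS G r un ut p))
      < 1 + sigmaS G r un ut p - un := by
    rw [Real.sqrt_lt' (by linarith)]
    nlinarith [mul_pos (mul_pos (show (0:ℝ) < 1 - un by linarith)
      (show (0:ℝ) < 1 - un by linarith)) h1]
  rw [sMax, div_lt_iff₀ h1]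
  linarith

private lemma sMax_gt (G r un ut p : ℝ) (hG1 : 1 < G) (hG2 : G ≤ 2)
    (hr : 0 < r) (hu : un ^ 2 + ut ^ 2 < 1) (hp : 0 < p) :
    -1 < sMax G r un ut p := by
  have hsg := sigmaS_pos G r un ut p hG1 hG2 hr hu hp
  have hun2 : -1 < un := by nlinarith [sq_nonneg ut]
  have h1 : (0:ℝ) < 1 + sigmaS G r un ut p := by linarith
  have := Real.sqrt_nonneg (sigmaS G r un ut p * (1 - un ^ 2 + sigmaS G r un ut p))
  rw [sMax, lt_div_iff₀ h1]
  nlinarith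

theorem hllc2d_K_pos (G r1 un1 ut1 p1 r2 un2 ut2 p2 sm sp A1 A2 B1 B2 : ℝ)
    (hG1 : 1 < G) (hG2 : G ≤ 2)
    (hr1 : 0 < r1) (hu1 : un1 ^ 2 + ut1 ^ 2 < 1) (hp1 : 0 < p1)
    (hr2 : 0 < r2) (hu2 : un2 ^ 2 + ut2 ^ 2 < 1) (hp2 : 0 < p2)
    (hsm : sm = min (sMin G r1 un1 ut1 p1) (sMin G r2 un2 ut2 p2))
    (hsp : sp = max (sMax G r1 un1 ut1 p1) (sMax G r2 un2 ut2 p2))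
    (hA1 : A1 = sm * Ec G r1 un1 ut1 p1 - mn G r1 un1 ut1 p1)
    (hA2 : A2 = sp * Ec G r2 un2 ut2 p2 - mn G r2 un2 ut2 p2)
    (hB1 : B1 = mn G r1 un1 ut1 p1 * (sm - un1) - p1)
    (hB2 : B2 = mn G r2 un2 ut2 p2 * (sp - un2) - p2)
    :
    0 < A1 ^ 2 - B1 ^ 2 - Dc r1 un1 ut1 ^ 2 * (sm - un1) ^ 2 - mt G r1 un1 ut1 p1 ^ 2 * (sm - un1) ^ 2 ∧ 0 < A2 ^ 2 - B2 ^ 2 - Dc r2 un2 ut2 ^ 2 * (sp - un2) ^ 2 - mt G r2 un2 ut2 p2 ^ 2 * (sp - un2) ^ 2 := by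
  subst hsm hsp hA1 hA2 hB1 hB2
  constructor
  · apply state_main G r1 un1 ut1 p1 _ hG1 hG2 hr1 hu1 hp1
    · exact lt_min (sMin_gt G r1 un1 ut1 p1 hG1 hG2 hr1 hu1 hp1)
        (sMin_gt G r2 un2 ut2 p2 hG1 hG2 hr2 hu2 hp2)
    · exact lt_of_le_of_lt (min_le_left _ _) (sMin_lt G r1 un1 ut1 p1 hG1 hG2 hr1 hu1 hp1)
    · exact hP_left G r1 un1 ut1 p1 _ hG1 hG2 hr1 hu1 hp1 (min_le_left _ _)
  · apply state_main G r2 un2 ut2 p2 _ hG1 hG2 hr2 hu2 hp2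
    · exact lt_of_lt_of_le (sMax_gt G r2 un2 ut2 p2 hG1 hG2 hr2 hu2 hp2) (le_max_right _ _)
    · exact max_lt (sMax_lt G r1 un1 ut1 p1 hG1 hG2 hr1 hu1 hp1)
        (sMax_lt G r2 un2 ut2 p2 hG1 hG2 hr2 hu2 hp2)
    · exact hP_right G r2 un2 ut2 p2 _ hG1 hG2 hr2 hu2 hp2 (le_max_right _ _)

end SRHD2D
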